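/- Independence of colorings under interleaved fresh permutations: Let M, C be positive integers with C ∣ M and let c : Fin M → Fin C be a balanced coloring (every fiber of size M/C). Let σ₁, …, σ_k be mutually independent random permutations of Fin M on some probability space, each uniformly distributed on the permutation group of Fin M. For j = 1, …, k define Y_j = c ∘ σ_j ∘ σ_{j−1} ∘ ⋯ ∘ σ₁ (a random element of Fin M → Fin C). Then Y₁, …, Y_k are mutually independent, and each Y_j is uniformly distributed on the set of balanced colorings of Fin M with C colors. -/

import Mathlib

open MeasureTheory ProbabilityTheory

section Aux
variable {α : Type*} [MeasurableSpace α] [MeasurableSingletonClass α] [Finite α]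

lemma ICI.measurableSet_all (s : Set α) : MeasurableSet s := s.toFinite.measurableSet

lemma ICI.measurable_of_finite {β : Type*} [MeasurableSpace β] (f : α → β) : Measurable f :=
  fun s _ => ICI.measurableSet_all _

omit [Finite α] in
lemma ICI.uniformOn_univ_singleton [Fintype α] (x : α) :
    uniformOn (Set.univ : Set α) {x} = (Fintype.card α : ENNReal)⁻¹ := by
  rw [uniformOn_univ, Measure.count_singleton, one_div]

lemma ICI.uniformOn_singleton_mem {B : Set α} {x : α} (hx : x ∈ B) :
    uniformOn B {x} = (B.toFinite.toFinset.card : ENNReal)⁻¹ := by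
  rw [uniformOn, cond_apply (ICI.measurableSet_all _)]
  have h1 : B ∩ {x} = {x} := by simp [Set.inter_eq_right.2, hx]
  rw [h1, Measure.count_singleton, mul_one, Measure.count_apply_finite _ B.toFinite]

lemma ICI.uniformOn_singleton_not_mem {B : Set α} {x : α} (hx : x ∉ B) :
    uniformOn B {x} = 0 := by
  rw [uniformOn, cond_apply (ICI.measurableSet_all _)]
  have h1 : B ∩ {x} = ∅ := by ext y; simp; rintro hy rfl; exact hx hy
  rw [h1, measure_empty, mul_zero]

lemma ICI.map_uniformOn {β : Type*} [MeasurableSpace β] [MeasurableSingletonClass β]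
    [Fintype β] [Fintype α] [Nonempty α] [DecidableEq β]
    (f : α → β) (B : Set β)
    (himg : ∀ x, (∃ a, f a = x) ↔ x ∈ B)
    (hfib : ∀ x ∈ B, ∀ y ∈ B,
      (Finset.univ.filter fun a => f a = x).card = (Finset.univ.filter fun a => f a = y).card) :
    (uniformOn (Set.univ : Set α)).map f = uniformOn B := by
  classical
  obtain ⟨a₀⟩ := ‹Nonempty α›
  have hB0 : f a₀ ∈ B := (himg _).1 ⟨a₀, rfl⟩
  set N := (Finset.univ.filter fun a => f a = f a₀).card with hN
  have hNpos : 0 < N := Finset.card_pos.2 ⟨a₀, by simp⟩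
  have hBfin : B.Finite := B.toFinite
  have hcard : Fintype.card α = N * hBfin.toFinset.card := by
    have h1 : ∀ a ∈ Finset.univ, f a ∈ hBfin.toFinset := by
      intro a _; simp only [Set.Finite.mem_toFinset]; exact (himg _).1 ⟨a, rfl⟩
    have h2 := Finset.card_eq_sum_card_fiberwise h1
    rw [Finset.card_univ] at h2
    rw [h2, Finset.sum_congr rfl fun x hx =>
      hfib x (hBfin.mem_toFinset.1 hx) (f a₀) hB0, Finset.sum_const, smul_eq_mul, mul_comm]
  refine Measure.ext_of_singleton fun x => ?_
  rw [Measure.map_apply (ICI.measurable_of_finite f) (measurableSet_singleton x)]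
  have hpre : f ⁻¹' {x} = ↑(Finset.univ.filter fun a => f a = x) := by ext a; simp
  by_cases hx : x ∈ B
  · have hNx : (Finset.univ.filter fun a => f a = x).card = N := hfib x hx (f a₀) hB0
    rw [uniformOn_univ, hpre, Measure.count_apply_finset, hNx,
      ICI.uniformOn_singleton_mem hx]
    have hBcard : (B.toFinite.toFinset.card : ENNReal) = hBfin.toFinset.card := by congr 1
    rw [hBcard, hcard]
    have hN0 : (N : ENNReal) ≠ 0 := by exact_mod_cast hNpos.ne'
    have hNt : (N : ENNReal) ≠ ⊤ := ENNReal.natCast_ne_top N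
    rw [Nat.cast_mul, div_eq_mul_inv, ENNReal.mul_inv (Or.inl hN0) (Or.inl hNt),
      ← mul_assoc, ENNReal.mul_inv_cancel hN0 hNt, one_mul]
  · have hNx : (Finset.univ.filter fun a => f a = x) = ∅ := by
      ext a; simp only [Finset.mem_filter, Finset.mem_univ, true_and, Finset.notMem_empty,
        iff_false]
      intro h; exact hx ((himg x).1 ⟨a, h⟩)
    rw [uniformOn_univ, hpre, hNx, ICI.uniformOn_singleton_not_mem hx]
    simp

lemma ICI.map_uniformOn_bijective {β : Type*} [MeasurableSpace β] [MeasurableSingletonClass β]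
    [Fintype β] [Fintype α] [Nonempty α]
    (f : α → β) (hf : Function.Bijective f) :
    (uniformOn (Set.univ : Set α)).map f = uniformOn (Set.univ : Set β) := by
  classical
  have hcard1 : ∀ x, (Finset.univ.filter fun a => f a = x).card = 1 := by
    intro x
    rw [Finset.card_eq_one]
    obtain ⟨a, ha⟩ := hf.surjective x
    refine ⟨a, ?_⟩
    ext b
    simp only [Finset.mem_filter, Finset.mem_univ, true_and, Finset.mem_singleton]
    constructor
    · intro hb; exact hf.injective (hb.trans ha.symm)
    · rintro rfl; exact ha
  exact ICI.map_uniformOn f Set.univ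
    (fun x => ⟨fun _ => trivial, fun _ => hf.surjective x⟩)
    (fun x _ y _ => by rw [hcard1, hcard1])

lemma ICI.pi_const_uniform {ι : Type*} [Fintype ι] [Fintype α] [Nonempty α] :
    Measure.pi (fun _ : ι => uniformOn (Set.univ : Set α)) =
      uniformOn (Set.univ : Set (ι → α)) := by
  classical
  haveI : IsProbabilityMeasure (uniformOn (Set.univ : Set α)) :=
    uniformOn_isProbabilityMeasure Set.finite_univ Set.univ_nonempty
  refine Measure.ext_of_singleton fun g => ?_
  rw [ICI.uniformOn_univ_singleton, ← Set.univ_pi_singleton g, Measure.pi_pi]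
  simp only [ICI.uniformOn_univ_singleton]
  rw [Finset.prod_const, ← ENNReal.inv_pow, Finset.card_univ]
  congr 1
  rw [← Nat.cast_pow]
  congr 1
  rw [Fintype.card_fun]

end Aux

section PiLemmas
variable {Ω : Type*} [MeasurableSpace Ω] (μ : Measure Ω) [IsProbabilityMeasure μ]
  {ι : Type*} [Fintype ι] {β : ι → Type*} [∀ i, MeasurableSpace (β i)]
  [∀ i, MeasurableSingletonClass (β i)] [∀ i, Finite (β i)]
  (X : ∀ i, Ω → β i) (hX : ∀ i, Measurable (X i))

include hX

lemma ICI.map_pi_of_iIndep (h : iIndepFun X μ) :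
    μ.map (fun ω i => X i ω) = Measure.pi (fun i => μ.map (X i)) := by
  haveI : ∀ i, IsProbabilityMeasure (μ.map (X i)) :=
    fun i => Measure.isProbabilityMeasure_map (hX i).aemeasurable
  refine Measure.ext_of_singleton fun g => ?_
  rw [← Set.univ_pi_singleton g, Measure.pi_pi,
    Measure.map_apply (measurable_pi_lambda _ hX)
      (MeasurableSet.univ_pi fun i => measurableSet_singleton _)]
  have hpre : (fun ω i => X i ω) ⁻¹' (Set.univ.pi fun i => {g i}) =
      ⋂ i ∈ Finset.univ, X i ⁻¹' {g i} := by
    ext ω; simp [Set.mem_pi]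
  rw [hpre, h.measure_inter_preimage_eq_mul Finset.univ
    (fun i _ => measurableSet_singleton _)]
  exact Finset.prod_congr rfl fun i _ =>
    (Measure.map_apply (hX i) (measurableSet_singleton _)).symm

lemma ICI.marginal_of_map_pi [DecidableEq ι] (ν : ∀ i, Measure (β i))
    [∀ i, IsProbabilityMeasure (ν i)]
    (h : μ.map (fun ω i => X i ω) = Measure.pi ν) (i : ι) : μ.map (X i) = ν i := by
  ext s hs
  rw [Measure.map_apply (hX i) hs]
  have hpre : X i ⁻¹' s = (fun ω j => X j ω) ⁻¹'
      (Set.univ.pi (Function.update (fun j => (Set.univ : Set (β j))) i s)) := by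
    ext ω
    rw [Set.mem_preimage, Set.mem_preimage, Set.mem_univ_pi]
    constructor
    · intro hω j
      rcases eq_or_ne j i with rfl | hj
      · rwa [Function.update_self]
      · rw [Function.update_of_ne hj]; trivial
    · intro hω
      have := hω i
      rwa [Function.update_self] at this
  rw [hpre, ← Measure.map_apply (measurable_pi_lambda _ hX)
    (MeasurableSet.univ_pi fun j => ICI.measurableSet_all _), h, Measure.pi_pi]
  rw [Fintype.prod_eq_single i fun j hj => by
    rw [Function.update_of_ne hj]; exact measure_univ]
  rw [Function.update_self]

lemma ICI.iIndepFun_of_map_pi (ν : ∀ i, Measure (β i)) [∀ i, IsProbabilityMeasure (ν i)]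
    (h : μ.map (fun ω i => X i ω) = Measure.pi ν) :
    iIndepFun X μ := by
  classical
  have hmarg : ∀ i, μ.map (X i) = ν i := ICI.marginal_of_map_pi μ X hX ν h
  rw [iIndepFun_iff_measure_inter_preimage_eq_mul]
  intro S sets hsets
  set A : ∀ i, Set (β i) := fun i => if i ∈ S then sets i else Set.univ with hA
  have hpre : (⋂ i ∈ S, X i ⁻¹' sets i) =
      (fun ω i => X i ω) ⁻¹' (Set.univ.pi A) := by
    ext ω
    rw [Set.mem_preimage, Set.mem_univ_pi]
    simp only [Set.mem_iInter, Set.mem_preimage, hA]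
    constructor
    · intro hω i
      by_cases hi : i ∈ S
      · rw [if_pos hi]; exact hω i hi
      · rw [if_neg hi]; trivial
    · intro hω i hi
      have := hω i; rwa [if_pos hi] at this
  rw [hpre, ← Measure.map_apply (measurable_pi_lambda _ hX)
    (MeasurableSet.univ_pi fun j => ICI.measurableSet_all _), h, Measure.pi_pi]
  rw [← Finset.prod_subset (Finset.subset_univ S) (fun i _ hi => by
    simp only [hA, if_neg hi]; exact measure_univ)]
  refine Finset.prod_congr rfl fun i hi => ?_
  rw [hA]; simp only [if_pos hi]
  rw [← hmarg i, Measure.map_apply (hX i) (hsets i hi)]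

end PiLemmas

section Phi
variable {G : Type*} [Group G] {k : ℕ}

/-- prefix products -/
def ICI.phi (s : Fin k → G) : Fin k → G := fun j =>
  (List.ofFn fun i : Fin (j.val + 1) => s (Fin.castLE j.isLt i)).reverse.prod

lemma ICI.phi_zero (s : Fin k → G) (h : 0 < k) : ICI.phi s ⟨0, h⟩ = s ⟨0, h⟩ := by
  simp only [ICI.phi, List.ofFn_succ, List.ofFn_zero, List.reverse_cons, List.reverse_nil,
    List.nil_append, List.prod_cons, List.prod_nil, mul_one]
  exact congrArg s (Fin.ext rfl)

lemma ICI.phi_succ (s : Fin k → G) (n : ℕ) (h : n + 1 < k) :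
    ICI.phi s ⟨n + 1, h⟩ = s ⟨n + 1, h⟩ * ICI.phi s ⟨n, Nat.lt_of_succ_lt h⟩ := by
  show (List.ofFn fun i : Fin (n + 2) => s (Fin.castLE h i)).reverse.prod = _
  rw [List.ofFn_succ', List.concat_eq_append, List.reverse_append]
  simp only [List.reverse_cons, List.reverse_nil, List.nil_append, List.singleton_append,
    List.prod_cons]
  refine congrArg₂ (· * ·) ?_ ?_
  · exact congrArg s (Fin.ext rfl)
  · have heq : (fun i : Fin (n + 1) => s (Fin.castLE h i.castSucc)) =
        fun i : Fin (n + 1) => s (Fin.castLE (Nat.lt_of_succ_lt h) i) :=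
      funext fun i => congrArg s (Fin.ext rfl)
    show (List.ofFn fun i : Fin (n + 1) => s (Fin.castLE h i.castSucc)).reverse.prod = _
    rw [heq]
    rfl

lemma ICI.phi_injective : Function.Injective (ICI.phi : (Fin k → G) → (Fin k → G)) := by
  intro s t hst
  funext j
  obtain ⟨n, hn⟩ := j
  induction n with
  | zero =>
      have := congrFun hst ⟨0, hn⟩
      rwa [ICI.phi_zero, ICI.phi_zero] at this
  | succ m ih =>
      have h1 := congrFun hst ⟨m + 1, hn⟩
      rw [ICI.phi_succ, ICI.phi_succ] at h1
      have h2 := congrFun hst ⟨m, Nat.lt_of_succ_lt hn⟩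
      rw [h2] at h1
      exact mul_right_cancel h1

lemma ICI.phi_bijective [Finite G] :
    Function.Bijective (ICI.phi : (Fin k → G) → (Fin k → G)) :=
  Finite.injective_iff_bijective.1 ICI.phi_injective

end Phi

section Perm
variable {M C : ℕ} (c : Fin M → Fin C)

lemma ICI.exists_perm (hbal : ∀ j : Fin C, (Finset.univ.filter fun i => c i = j).card = M / C)
    (x : Fin M → Fin C)
    (hx : ∀ j : Fin C, (Finset.univ.filter fun i => x i = j).card = M / C) :
    ∃ g : Equiv.Perm (Fin M), c ∘ ⇑g = x := by
  classical
  have hcard : ∀ j : Fin C, Fintype.card {i // x i = j} = Fintype.card {i // c i = j} := by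
    intro j
    rw [Fintype.card_subtype, Fintype.card_subtype, hbal j, hx j]
  refine ⟨((Equiv.sigmaFiberEquiv x).symm.trans
    ((Equiv.sigmaCongrRight fun j => Fintype.equivOfCardEq (hcard j)).trans
      (Equiv.sigmaFiberEquiv c))), ?_⟩
  funext i
  simp only [Function.comp_apply, Equiv.trans_apply, Equiv.sigmaFiberEquiv,
    Equiv.sigmaCongrRight, Equiv.coe_fn_mk, Equiv.coe_fn_symm_mk]
  exact ((Fintype.equivOfCardEq (hcard (x i))) ⟨i, rfl⟩).2

lemma ICI.fiber_card_eq (x : Fin M → Fin C) (g₀ : Equiv.Perm (Fin M)) (h₀ : c ∘ ⇑g₀ = x) :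
    (Finset.univ.filter fun g : Equiv.Perm (Fin M) => c ∘ ⇑g = x).card =
      (Finset.univ.filter fun h : Equiv.Perm (Fin M) => c ∘ ⇑h = c).card := by
  classical
  have e : {g : Equiv.Perm (Fin M) // c ∘ ⇑g = x} ≃
      {h : Equiv.Perm (Fin M) // c ∘ ⇑h = c} := by
    refine ⟨fun g => ⟨g.1 * g₀⁻¹, ?_⟩, fun h => ⟨h.1 * g₀, ?_⟩, ?_, ?_⟩
    · funext i
      have h1 := congrFun g.2 (g₀⁻¹ i)
      have h2 := congrFun h₀ (g₀⁻¹ i)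
      simp only [Function.comp_apply, Equiv.Perm.coe_mul] at h1 h2 ⊢
      rw [h1, ← h2]; simp
    · funext i
      have h1 := congrFun h.2 (g₀ i)
      have h2 := congrFun h₀ i
      simp only [Function.comp_apply, Equiv.Perm.coe_mul] at h1 h2 ⊢
      rw [h1, h2]
    · intro g; ext1; simp [mul_assoc]
    · intro h; ext1; simp [mul_assoc]
  have := Fintype.card_congr e
  rwa [Fintype.card_subtype, Fintype.card_subtype] at this

lemma ICI.balanced_comp (g : Equiv.Perm (Fin M)) (j : Fin C) :
    (Finset.univ.filter fun i => c (g i) = j).card =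
      (Finset.univ.filter fun i => c i = j).card := by
  refine Finset.card_bij (fun i _ => g i) ?_ ?_ ?_
  · intro a ha
    simp only [Finset.mem_filter, Finset.mem_univ, true_and] at ha ⊢
    exact ha
  · intro a _ b _ hab
    exact g.injective hab
  · intro b hb
    simp only [Finset.mem_filter, Finset.mem_univ, true_and] at hb
    exact ⟨g.symm b, by simp [hb], g.apply_symm_apply b⟩

end Perm

/-- Independence of colorings under interleaved fresh permutations. -/
theorem interleaved_colorings_independent {Ω : Type} [MeasurableSpace Ω]
    (μ : Measure Ω) [IsProbabilityMeasure μ]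
    (M C k : ℕ) [NeZero M] [NeZero C] (hdvd : C ∣ M)
    (c : Fin M → Fin C)
    (hbal : ∀ j : Fin C, (Finset.univ.filter fun i => c i = j).card = M / C)
    [MeasurableSpace (Equiv.Perm (Fin M))]
    [MeasurableSingletonClass (Equiv.Perm (Fin M))]
    (σ : Fin k → Ω → Equiv.Perm (Fin M))
    (hσmeas : ∀ i, Measurable (σ i))
    (hσindep : iIndepFun σ μ)
    (hσunif : ∀ i, μ.map (σ i) = uniformOn (Set.univ : Set (Equiv.Perm (Fin M))))
    (Y : Fin k → Ω → (Fin M → Fin C))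
    (hY : ∀ (j : Fin k) (ω : Ω),
      Y j ω = c ∘ ⇑((List.ofFn fun i : Fin (j.val + 1) =>
        σ (Fin.castLE j.isLt i) ω).reverse.prod)) :
    iIndepFun Y μ ∧
      ∀ j : Fin k, μ.map (Y j) =
        uniformOn {x : Fin M → Fin C |
          ∀ j : Fin C, (Finset.univ.filter fun i => x i = j).card = M / C} := by
  classical
  haveI : Nonempty (Equiv.Perm (Fin M)) := ⟨1⟩
  set U : Measure (Equiv.Perm (Fin M)) :=
    uniformOn (Set.univ : Set (Equiv.Perm (Fin M))) with hU
  haveI hUprob : IsProbabilityMeasure U :=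
    uniformOn_isProbabilityMeasure Set.finite_univ Set.univ_nonempty
  set B : Set (Fin M → Fin C) :=
    {x | ∀ j : Fin C, (Finset.univ.filter fun i => x i = j).card = M / C} with hB
  set fc : Equiv.Perm (Fin M) → (Fin M → Fin C) := fun g => c ∘ ⇑g with hfc
  have hfcmeas : Measurable fc := ICI.measurable_of_finite fc
  haveI : IsProbabilityMeasure (U.map fc) := Measure.isProbabilityMeasure_map hfcmeas.aemeasurable
  set P : Fin k → Ω → Equiv.Perm (Fin M) := fun j ω => ICI.phi (fun i => σ i ω) j with hP
  have hPY : ∀ j, Y j = fc ∘ P j := by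
    intro j; funext ω; rw [hY j ω]; rfl
  have hSmeas : Measurable (fun ω (i : Fin k) => σ i ω) := measurable_pi_lambda _ hσmeas
  have hPmeas : ∀ j, Measurable (P j) := fun j =>
    (ICI.measurable_of_finite (fun s : Fin k → Equiv.Perm (Fin M) => ICI.phi s j)).comp hSmeas
  have hYmeas : ∀ j, Measurable (Y j) := fun j => by
    rw [hPY j]; exact hfcmeas.comp (hPmeas j)
  have h1 : μ.map (fun ω (i : Fin k) => σ i ω) = Measure.pi (fun _ => U) := by
    rw [ICI.map_pi_of_iIndep μ σ hσmeas hσindep]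
    congr 1
    funext i
    exact hσunif i
  have h2 : Measure.pi (fun _ : Fin k => U) =
      uniformOn (Set.univ : Set (Fin k → Equiv.Perm (Fin M))) :=
    ICI.pi_const_uniform
  have h3 : μ.map (fun ω (j : Fin k) => P j ω) =
      uniformOn (Set.univ : Set (Fin k → Equiv.Perm (Fin M))) := by
    have hco : (fun ω (j : Fin k) => P j ω) =
        (ICI.phi : (Fin k → Equiv.Perm (Fin M)) → (Fin k → Equiv.Perm (Fin M))) ∘
          (fun ω i => σ i ω) := rfl
    rw [hco, ← Measure.map_map (ICI.measurable_of_finite _) hSmeas, h1, h2,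
      ICI.map_uniformOn_bijective _ ICI.phi_bijective]
  have h4 : μ.map (fun ω (j : Fin k) => Y j ω) = Measure.pi (fun _ : Fin k => U.map fc) := by
    have hco : (fun ω (j : Fin k) => Y j ω) =
        (fun p : Fin k → Equiv.Perm (Fin M) => fun j => fc (p j)) ∘
          (fun ω (j : Fin k) => P j ω) := by
      funext ω
      funext j
      show Y j ω = fc (P j ω)
      rw [hPY j]; rfl
    rw [hco, ← Measure.map_map (ICI.measurable_of_finite _)
      (measurable_pi_lambda _ hPmeas), h3, ← h2]
    refine Measure.ext_of_singleton fun x => ?_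
    rw [Measure.map_apply (ICI.measurable_of_finite _) (measurableSet_singleton x)]
    have hpre : (fun p : Fin k → Equiv.Perm (Fin M) => fun j => fc (p j)) ⁻¹' {x} =
        Set.univ.pi (fun j => fc ⁻¹' {x j}) := by
      ext p
      simp [Set.mem_pi, funext_iff]
    rw [hpre, Measure.pi_pi, ← Set.univ_pi_singleton x, Measure.pi_pi]
    exact Finset.prod_congr rfl fun j _ =>
      (Measure.map_apply hfcmeas (measurableSet_singleton _)).symm
  have h5 : U.map fc = uniformOn B := by
    refine ICI.map_uniformOn fc B ?_ ?_
    · intro x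
      constructor
      · rintro ⟨g, rfl⟩ j
        exact (ICI.balanced_comp c g j).trans (hbal j)
      · intro hx
        exact ICI.exists_perm c hbal x hx
    · intro x hx y hy
      obtain ⟨gx, hgx⟩ := ICI.exists_perm c hbal x hx
      obtain ⟨gy, hgy⟩ := ICI.exists_perm c hbal y hy
      rw [ICI.fiber_card_eq c x gx hgx, ICI.fiber_card_eq c y gy hgy]
  refine ⟨?_, ?_⟩
  · exact ICI.iIndepFun_of_map_pi μ Y hYmeas _ h4
  · intro j
    rw [ICI.marginal_of_map_pi μ Y hYmeas _ h4 j, h5]
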